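/- For every x ∈ ℝ^d \ {0} and ν > 0, the Lennard-Jones force satisfies the pointwise bound |K(x)| ≤ C_{1,ν} ε (|x|^{−(a+1)} 𝟙_{|x|≤ν} + |x|^{−(b+1)} 𝟙_{|x|>ν}), where C_{1,ν} = max{(a+1)R₀^a + (b+1)R₀^b ν^{a−b}, (a+1)R₀^a ν^{−(a−b)} + (b+1)R₀^b}. -/
import Mathlib


open MeasureTheory Metric Real Set

noncomputable def LJ (d : ℕ) (ε R₀ a b : ℝ) (x : EuclideanSpace ℝ (Fin d)) :
    EuclideanSpace ℝ (Fin d) :=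
  (ε * (R₀ ^ a / ‖x‖ ^ (a + 1) - R₀ ^ b / ‖x‖ ^ (b + 1))) • (‖x‖⁻¹ • x)

/-- The constant C_{1,ν}. -/
noncomputable def C1nu (R₀ a b ν : ℝ) : ℝ :=
  max ((a + 1) * R₀ ^ a + (b + 1) * R₀ ^ b * ν ^ (a - b))
    ((a + 1) * R₀ ^ a * ν ^ (-(a - b)) + (b + 1) * R₀ ^ b)

open Real in
lemma LJ_aux_common (R₀ a b r : ℝ) (hR : 0 < R₀) (hr : 0 < r) :
    |R₀ ^ a / r ^ (a + 1) - R₀ ^ b / r ^ (b + 1)|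
      ≤ R₀ ^ a / r ^ (a + 1) + R₀ ^ b / r ^ (b + 1) := by
  have hP : (0:ℝ) < r ^ (a + 1) := rpow_pos_of_pos hr _
  have hQ : (0:ℝ) < r ^ (b + 1) := rpow_pos_of_pos hr _
  have hRa : (0:ℝ) < R₀ ^ a := rpow_pos_of_pos hR _
  have hRb : (0:ℝ) < R₀ ^ b := rpow_pos_of_pos hR _
  have := abs_sub (R₀ ^ a / r ^ (a + 1)) (R₀ ^ b / r ^ (b + 1))
  rwa [abs_of_pos (div_pos hRa hP), abs_of_pos (div_pos hRb hQ)] at this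

open Real in
lemma LJ_aux_le (ε R₀ a b ν r : ℝ) (hε : 0 < ε) (hR : 0 < R₀) (hb : 0 < b)
    (hba : b < a) (hν : 0 < ν) (hr : 0 < r) (hcase : r ≤ ν) :
    ε * |R₀ ^ a / r ^ (a + 1) - R₀ ^ b / r ^ (b + 1)|
      ≤ C1nu R₀ a b ν * ε * r ^ (-(a + 1)) := by
  have hP : (0:ℝ) < r ^ (a + 1) := rpow_pos_of_pos hr _
  have hQ : (0:ℝ) < r ^ (b + 1) := rpow_pos_of_pos hr _
  have hRa : (0:ℝ) < R₀ ^ a := rpow_pos_of_pos hR _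
  have hRb : (0:ℝ) < R₀ ^ b := rpow_pos_of_pos hR _
  have hmul : r ^ (b + 1) * r ^ (a - b) = r ^ (a + 1) := by
    rw [← rpow_add hr]; ring_nf
  have hneg : r ^ (-(a + 1)) = (r ^ (a + 1))⁻¹ := rpow_neg hr.le _
  have hpow : r ^ (a - b) ≤ ν ^ (a - b) := rpow_le_rpow hr.le hcase (by linarith)
  have hνab : (0:ℝ) < ν ^ (a - b) := rpow_pos_of_pos hν _
  have key : R₀ ^ a / r ^ (a + 1) + R₀ ^ b / r ^ (b + 1)
      ≤ (R₀ ^ a + R₀ ^ b * ν ^ (a - b)) / r ^ (a + 1) := by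
    rw [div_add_div _ _ (ne_of_gt hP) (ne_of_gt hQ), div_le_div_iff₀ (by positivity) hP]
    have h2 : R₀ ^ b * r ^ (a + 1) ≤ R₀ ^ b * ν ^ (a - b) * r ^ (b + 1) := by
      rw [← hmul]
      nlinarith [mul_nonneg (mul_nonneg hRb.le hQ.le) (sub_nonneg.mpr hpow)]
    nlinarith
  have hC : R₀ ^ a + R₀ ^ b * ν ^ (a - b) ≤ C1nu R₀ a b ν := by
    refine le_trans ?_ (le_max_left _ _)
    nlinarith [mul_nonneg (by linarith : (0:ℝ) ≤ a) hRa.le,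
      mul_nonneg (mul_nonneg hb.le hRb.le) hνab.le]
  rw [hneg]
  calc ε * |R₀ ^ a / r ^ (a + 1) - R₀ ^ b / r ^ (b + 1)|
      ≤ ε * ((R₀ ^ a + R₀ ^ b * ν ^ (a - b)) / r ^ (a + 1)) :=
        mul_le_mul_of_nonneg_left (le_trans (LJ_aux_common R₀ a b r hR hr) key) hε.le
    _ ≤ ε * (C1nu R₀ a b ν / r ^ (a + 1)) := by
        apply mul_le_mul_of_nonneg_left _ hε.le
        gcongr
    _ = C1nu R₀ a b ν * ε * (r ^ (a + 1))⁻¹ := by ring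

open Real in
lemma LJ_aux_gt (ε R₀ a b ν r : ℝ) (hε : 0 < ε) (hR : 0 < R₀) (hb : 0 < b)
    (hba : b < a) (hν : 0 < ν) (hr : 0 < r) (hcase : ν < r) :
    ε * |R₀ ^ a / r ^ (a + 1) - R₀ ^ b / r ^ (b + 1)|
      ≤ C1nu R₀ a b ν * ε * r ^ (-(b + 1)) := by
  have hP : (0:ℝ) < r ^ (a + 1) := rpow_pos_of_pos hr _
  have hQ : (0:ℝ) < r ^ (b + 1) := rpow_pos_of_pos hr _
  have hRa : (0:ℝ) < R₀ ^ a := rpow_pos_of_pos hR _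
  have hRb : (0:ℝ) < R₀ ^ b := rpow_pos_of_pos hR _
  have hmul : r ^ (b + 1) * r ^ (a - b) = r ^ (a + 1) := by
    rw [← rpow_add hr]; ring_nf
  have hneg : r ^ (-(b + 1)) = (r ^ (b + 1))⁻¹ := rpow_neg hr.le _
  have hpow : ν ^ (a - b) ≤ r ^ (a - b) := rpow_le_rpow hν.le hcase.le (by linarith)
  have hνab : (0:ℝ) < ν ^ (a - b) := rpow_pos_of_pos hν _
  have hνneg : ν ^ (-(a - b)) = (ν ^ (a - b))⁻¹ := rpow_neg hν.le _
  have key : R₀ ^ a / r ^ (a + 1) + R₀ ^ b / r ^ (b + 1)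
      ≤ (R₀ ^ a * ν ^ (-(a - b)) + R₀ ^ b) / r ^ (b + 1) := by
    rw [div_add_div _ _ (ne_of_gt hP) (ne_of_gt hQ), div_le_div_iff₀ (by positivity) hQ]
    rw [hνneg]
    have h1 : R₀ ^ a * r ^ (b + 1) * ν ^ (a - b) ≤ R₀ ^ a * r ^ (a + 1) := by
      rw [← hmul]
      nlinarith [mul_nonneg (mul_nonneg hRa.le hQ.le) (sub_nonneg.mpr hpow)]
    have h2 : R₀ ^ a * r ^ (b + 1) ≤ R₀ ^ a * (ν ^ (a - b))⁻¹ * r ^ (a + 1) := by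
      rw [show R₀ ^ a * (ν ^ (a - b))⁻¹ * r ^ (a + 1) = (R₀ ^ a * r ^ (a + 1)) / (ν ^ (a - b)) by
        field_simp, le_div_iff₀ hνab]
      linarith [h1]
    nlinarith [mul_le_mul_of_nonneg_right h2 hQ.le, mul_nonneg hRb.le hQ.le]
  have hC : R₀ ^ a * ν ^ (-(a - b)) + R₀ ^ b ≤ C1nu R₀ a b ν := by
    refine le_trans ?_ (le_max_right _ _)
    have hn : (0:ℝ) < ν ^ (-(a - b)) := rpow_pos_of_pos hν _
    nlinarith [mul_nonneg (mul_nonneg (by linarith : (0:ℝ) ≤ a) hRa.le) hn.le,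
      mul_nonneg hb.le hRb.le]
  rw [hneg]
  calc ε * |R₀ ^ a / r ^ (a + 1) - R₀ ^ b / r ^ (b + 1)|
      ≤ ε * ((R₀ ^ a * ν ^ (-(a - b)) + R₀ ^ b) / r ^ (b + 1)) :=
        mul_le_mul_of_nonneg_left (le_trans (LJ_aux_common R₀ a b r hR hr) key) hε.le
    _ ≤ ε * (C1nu R₀ a b ν / r ^ (b + 1)) := by
        apply mul_le_mul_of_nonneg_left _ hε.le
        gcongr
    _ = C1nu R₀ a b ν * ε * (r ^ (b + 1))⁻¹ := by ring

/-- Pointwise bound: for every x ≠ 0,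
|K(x)| ≤ C_{1,ν} ε (|x|^{−(a+1)} 𝟙_{|x|≤ν} + |x|^{−(b+1)} 𝟙_{|x|>ν}). -/
theorem LJ_pointwise_bound (d : ℕ) (hd : 2 ≤ d) (ε R₀ a b : ℝ)
    (hε : 0 < ε) (hR : 0 < R₀) (hb : 0 < b) (hba : b < a) (ν : ℝ) (hν : 0 < ν) :
    ∀ x : EuclideanSpace ℝ (Fin d), x ≠ 0 →
      ‖LJ d ε R₀ a b x‖ ≤ C1nu R₀ a b ν * ε *
        (Set.indicator {y : EuclideanSpace ℝ (Fin d) | ‖y‖ ≤ ν}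
            (fun y => ‖y‖ ^ (-(a + 1))) x +
         Set.indicator {y : EuclideanSpace ℝ (Fin d) | ν < ‖y‖}
            (fun y => ‖y‖ ^ (-(b + 1))) x) := by
  intro x hx
  have hxn : 0 < ‖x‖ := norm_pos_iff.mpr hx
  have hunit : ‖‖x‖⁻¹ • x‖ = 1 := by
    rw [norm_smul, norm_inv, norm_norm]
    field_simp
  have hnorm : ‖LJ d ε R₀ a b x‖
      = ε * |R₀ ^ a / ‖x‖ ^ (a + 1) - R₀ ^ b / ‖x‖ ^ (b + 1)| := by
    rw [LJ, norm_smul, hunit, mul_one, Real.norm_eq_abs, abs_mul, abs_of_pos hε]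
  rcases le_or_gt ‖x‖ ν with hcase | hcase
  · rw [Set.indicator_of_mem (by exact hcase :
          x ∈ {y : EuclideanSpace ℝ (Fin d) | ‖y‖ ≤ ν}),
        Set.indicator_of_notMem (by simpa using not_lt.mpr hcase :
          x ∉ {y : EuclideanSpace ℝ (Fin d) | ν < ‖y‖}), add_zero, hnorm]
    exact LJ_aux_le ε R₀ a b ν ‖x‖ hε hR hb hba hν hxn hcase
  · rw [Set.indicator_of_notMem (by simpa using not_le.mpr hcase :
          x ∉ {y : EuclideanSpace ℝ (Fin d) | ‖y‖ ≤ ν}),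
        Set.indicator_of_mem (by exact hcase :
          x ∈ {y : EuclideanSpace ℝ (Fin d) | ν < ‖y‖}), zero_add, hnorm]
    exact LJ_aux_gt ε R₀ a b ν ‖x‖ hε hR hb hba hν hxn hcase
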